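/- Let H be a real separable Hilbert space, let U ⊆ H be a nonempty open connected set, and let ψ, f : H → (-∞,+∞] be proper lower semicontinuous convex functions with U contained in the interior of dom(ψ) intersected with the interior of dom(f). Suppose there is a set D dense in U such that every x ∈ D is a point where both ∂ψ(x) and ∂f(x) are singletons and ∇ψ(x) = ∇f(x). Then there exists a constant a ∈ ℝ such that ψ(x) = f(x) + a for all x ∈ U. -/

import Mathlib

open MeasureTheory Filter Topology Metric

noncomputable section

/-- The subdifferential of an extended-real-valued function on a Hilbert space. -/
def subdiff {H : Type*} [NormedAddCommGroup H] [InnerProductSpace ℝ H]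
    (f : H → EReal) (x : H) : Set H :=
  {y | ∀ z : H, f x + ((inner ℝ y (z - x) : ℝ) : EReal) ≤ f z}

/-- The graph of the subdifferential. -/
def subdiffGraph {H : Type*} [NormedAddCommGroup H] [InnerProductSpace ℝ H]
    (f : H → EReal) : Set (H × H) :=
  {p | p.2 ∈ subdiff f p.1}

/-- Convexity for extended-real-valued functions. -/
def EConvexOn {H : Type*} [NormedAddCommGroup H] [InnerProductSpace ℝ H]
    (f : H → EReal) : Prop :=
  ∀ x y : H, ∀ t : ℝ, 0 ≤ t → t ≤ 1 →
    f (t • x + (1 - t) • y) ≤ (t : EReal) * f x + ((1 - t : ℝ) : EReal) * f y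

/-- A proper lower semicontinuous convex function `H → (-∞, +∞]`. -/
def ProperLscConvex {H : Type*} [NormedAddCommGroup H] [InnerProductSpace ℝ H]
    (f : H → EReal) : Prop :=
  (∃ x, f x ≠ ⊤) ∧ (∀ x, f x ≠ ⊥) ∧ LowerSemicontinuous f ∧ EConvexOn f

/-- A Lipschitz hypersurface: `{z + τ(z) • v : z ∈ (span v)ᵒᵖ}` for Lipschitz `τ`. -/
def IsLipschitzHypersurface {H : Type*} [NormedAddCommGroup H] [InnerProductSpace ℝ H]
    (A : Set H) : Prop :=
  ∃ v : H, v ≠ 0 ∧ ∃ (τ : H → ℝ) (K : NNReal),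
    LipschitzOnWith K τ ((Submodule.span ℝ {v})ᗮ : Set H) ∧
    A = (fun z : H => z + τ z • v) '' ((Submodule.span ℝ {v})ᗮ : Set H)

/-- Topological support of a measure. -/
def msupport {X : Type*} [TopologicalSpace X] {m : MeasurableSpace X}
    (μ : Measure X) : Set X :=
  {x | ∀ U : Set X, IsOpen U → x ∈ U → 0 < μ U}

/-- The class `P^ℓ(H)`: measures giving zero mass to all Lipschitz hypersurfaces. -/
def IsLipschitzNull {H : Type*} [NormedAddCommGroup H] [InnerProductSpace ℝ H]
    {m : MeasurableSpace H} (P : Measure H) : Prop :=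
  ∀ A : Set H, IsLipschitzHypersurface A → P A = 0

/-- Cyclical monotonicity of a subset of `H × H`. -/
def CyclicallyMonotone {H : Type*} [NormedAddCommGroup H] [InnerProductSpace ℝ H]
    (Γ : Set (H × H)) : Prop :=
  ∀ (n : ℕ) (q : Fin (n + 1) → H × H), (∀ k, q k ∈ Γ) →
    ∑ k : Fin (n + 1), (inner ℝ (q k).1 ((q (k + 1)).2 - (q k).2) : ℝ) ≤ 0

/-- Weak convergence of a sequence of measures against bounded continuous functions. -/
def WeakConv {X : Type*} [TopologicalSpace X] {m : MeasurableSpace X}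
    (μ : ℕ → Measure X) (ν : Measure X) : Prop :=
  ∀ f : BoundedContinuousFunction X ℝ,
    Tendsto (fun n => ∫ x, f x ∂(μ n)) atTop (𝓝 (∫ x, f x ∂ν))

section AuxPotentials
open Metric
variable {H : Type*} [NormedAddCommGroup H] [InnerProductSpace ℝ H]

/-- real convexity inequality from EConvexOn when endpoints are finite -/
lemma aux_conv {ψ : H → EReal} (hconv : EConvexOn ψ) (hbot : ∀ x, ψ x ≠ ⊥)
    {z q : H} {t : ℝ} (h0 : 0 ≤ t) (h1 : t ≤ 1) (hz : ψ z ≠ ⊤) (hq : ψ q ≠ ⊤) :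
    (ψ (t•z + (1-t)•q)).toReal ≤ t * (ψ z).toReal + (1-t) * (ψ q).toReal := by
  have hzc : ψ z = ((ψ z).toReal : EReal) := (EReal.coe_toReal hz (hbot z)).symm
  have hqc : ψ q = ((ψ q).toReal : EReal) := (EReal.coe_toReal hq (hbot q)).symm
  have h := hconv z q t h0 h1
  rw [hzc, hqc] at h
  have h2 : (t : EReal) * ((ψ z).toReal : EReal) + ((1-t : ℝ) : EReal) * ((ψ q).toReal : EReal)
      = ((t * (ψ z).toReal + (1-t) * (ψ q).toReal : ℝ) : EReal) := by
    push_cast; ring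
  rw [h2] at h
  exact EReal.toReal_le_toReal h (hbot _) (EReal.coe_ne_top _)

lemma aux_subgrad {ψ : H → EReal} (hbot : ∀ x, ψ x ≠ ⊥) {d v z : H}
    (hv : v ∈ subdiff ψ d) (hd : ψ d ≠ ⊤) (hz : ψ z ≠ ⊤) :
    (ψ d).toReal + (inner ℝ v (z - d) : ℝ) ≤ (ψ z).toReal := by
  have h := hv z
  have hdc : ψ d = ((ψ d).toReal : EReal) := (EReal.coe_toReal hd (hbot d)).symm
  rw [hdc, ← EReal.coe_add] at h
  have := EReal.toReal_le_toReal h (EReal.coe_ne_bot _) hz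
  rwa [EReal.toReal_coe] at this

/-- Baire: lsc convex finite on a ball implies bounded above on a smaller ball -/
lemma aux_locbound [CompleteSpace H] {ψ : H → EReal}
    (hlsc : LowerSemicontinuous ψ) (hconv : EConvexOn ψ) (hbot : ∀ x, ψ x ≠ ⊥)
    {x : H} {r : ℝ} (hr : 0 < r) (hfin : ∀ y ∈ ball x (4*r), ψ y ≠ ⊤) :
    ∃ ε > 0, ∃ M : ℝ, ε ≤ r ∧ ∀ y ∈ ball x ε, ψ y ≤ (M : EReal) := by
  set B : ℕ → Set H := fun n =>
    (closedBall x r ∩ {y | ψ y ≤ ((n : ℝ) : EReal)}) ∪ {y | r ≤ dist y x} with hB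
  have hclosed : ∀ n, IsClosed (B n) := by
    intro n
    refine IsClosed.union (IsClosed.inter isClosed_closedBall ?_) ?_
    · exact hlsc.isClosed_preimage _
    · exact isClosed_le continuous_const (continuous_id.dist continuous_const)
  have hcover : (⋃ n, B n) = Set.univ := by
    ext y; simp only [Set.mem_iUnion, Set.mem_univ, iff_true]
    rcases le_or_gt r (dist y x) with h | h
    · exact ⟨0, Or.inr h⟩
    · have hy : ψ y ≠ ⊤ := hfin y (by
        rw [mem_ball]; linarith)
      obtain ⟨n, hn⟩ := exists_nat_ge (ψ y).toReal
      refine ⟨n, Or.inl ⟨mem_closedBall.2 h.le, ?_⟩⟩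
      show ψ y ≤ ((n : ℝ) : EReal)
      have hcoe : ψ y = ((ψ y).toReal : EReal) := (EReal.coe_toReal hy (hbot y)).symm
      rw [hcoe]; exact_mod_cast hn
  have hdense := dense_iUnion_interior_of_closed hclosed hcover
  obtain ⟨p, hp, hpmem⟩ := hdense.inter_open_nonempty (ball x (r/2)) isOpen_ball
    ⟨x, mem_ball_self (by linarith)⟩
  rw [Set.mem_iUnion] at hpmem
  obtain ⟨n, hpn⟩ := hpmem
  have hpmem := hp
  obtain ⟨ρ, hρpos, hρ⟩ := Metric.isOpen_iff.1 isOpen_interior p hpn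
  -- shrink ρ
  set ρ' := min ρ (r/2) with hρ'
  have hρ'pos : 0 < ρ' := lt_min hρpos (by linarith)
  have hballA : ∀ z ∈ ball p ρ', ψ z ≤ ((n : ℝ) : EReal) := by
    intro z hz
    have hz1 : z ∈ B n := interior_subset (hρ (ball_subset_ball (min_le_left _ _) hz))
    have hz2 : dist z x < r := by
      have := mem_ball.1 hz
      have h2 := mem_ball.1 hpmem
      calc dist z x ≤ dist z p + dist p x := dist_triangle _ _ _
        _ < ρ' + r/2 := by gcongr
        _ ≤ r/2 + r/2 := by gcongr; exact min_le_right _ _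
        _ = r := by ring
    rcases hz1 with h | h
    · exact h.2
    · exact absurd h (not_le.2 hz2)
  -- spread to x via reflection point q = 2x - p
  set q : H := (2:ℝ) • x - p with hq
  have hqball : q ∈ ball x (4*r) := by
    rw [mem_ball, dist_eq_norm]
    have : q - x = x - p := by rw [hq]; module
    rw [this, ← dist_eq_norm]
    have := mem_ball.1 hpmem
    rw [dist_comm] at this
    linarith
  have hqfin : ψ q ≠ ⊤ := hfin q hqball
  set c : ℝ := (ψ q).toReal with hc
  refine ⟨ρ'/2, by linarith, (n + c)/2, by linarith [min_le_right ρ (r/2)], ?_⟩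
  intro y hy
  set z : H := (2:ℝ) • y - q with hz
  have hzball : z ∈ ball p ρ' := by
    rw [mem_ball, dist_eq_norm]
    have h1 : z - p = (2:ℝ) • (y - x) := by rw [hz, hq]; module
    rw [h1, norm_smul]
    have := mem_ball.1 hy
    rw [dist_eq_norm] at this
    simp only [Real.norm_ofNat]
    linarith
  have hzfin : ψ z ≠ ⊤ := by
    intro htop
    have := hballA z hzball
    rw [htop] at this
    exact absurd (top_le_iff.1 this) (EReal.coe_ne_top _)
  have hyval : y = (1/2 : ℝ) • z + (1 - (1/2:ℝ)) • q := by
    rw [hz]; module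
  have h := aux_conv hconv hbot (z := z) (q := q) (t := (1/2:ℝ)) (by norm_num) (by norm_num)
    hzfin hqfin
  rw [← hyval] at h
  have hzle : (ψ z).toReal ≤ (n : ℝ) := by
    have := hballA z hzball
    exact EReal.toReal_le_toReal this (hbot z) (EReal.coe_ne_top _) |>.trans_eq (EReal.toReal_coe _)
  have hyfin : ψ y ≠ ⊤ := by
    have hy4 : y ∈ ball x (4*r) := by
      have := mem_ball.1 hy
      rw [mem_ball]
      have : dist y x < ρ'/2 := this
      have hρ'r : ρ' ≤ r/2 := min_le_right _ _
      linarith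
    exact hfin y hy4
  have : ψ y = ((ψ y).toReal : EReal) := (EReal.coe_toReal hyfin (hbot y)).symm
  rw [this]
  rw [EReal.coe_le_coe_iff]
  calc (ψ y).toReal ≤ (1/2) * (ψ z).toReal + (1 - 1/2) * c := h
    _ ≤ (1/2) * n + (1/2) * c := by nlinarith
    _ = (n + c)/2 := by ring

/-- finiteness from upper bound -/
lemma aux_fin {ψ : H → EReal} {M : ℝ} {y : H} (h : ψ y ≤ (M : EReal)) : ψ y ≠ ⊤ :=
  fun ht => absurd (ht ▸ h) (by simp)

lemma aux_toReal_le {ψ : H → EReal} (hbot : ∀ x, ψ x ≠ ⊥) {M : ℝ} {y : H}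
    (h : ψ y ≤ (M : EReal)) : (ψ y).toReal ≤ M := by
  have := EReal.toReal_le_toReal h (hbot y) (EReal.coe_ne_top _)
  rwa [EReal.toReal_coe] at this

/-- lower bound by reflection -/
lemma aux_lower {ψ : H → EReal} (hconv : EConvexOn ψ) (hbot : ∀ x, ψ x ≠ ⊥)
    {x : H} {ε M : ℝ} (hbound : ∀ y ∈ ball x ε, ψ y ≤ (M : EReal))
    {y : H} (hy : y ∈ ball x ε) :
    2 * (ψ x).toReal - M ≤ (ψ y).toReal := by
  have hε : 0 < ε := pos_of_mem_ball hy
  have hxb : x ∈ ball x ε := mem_ball_self hε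
  have hrefl : (2:ℝ) • x - y ∈ ball x ε := by
    rw [mem_ball, dist_eq_norm]
    have h1 : (2:ℝ) • x - y - x = x - y := by module
    rw [h1, ← dist_eq_norm, dist_comm]
    exact mem_ball.1 hy
  have hx : x = (1/2 : ℝ) • y + (1 - (1/2:ℝ)) • ((2:ℝ) • x - y) := by module
  have h := aux_conv hconv hbot (z := y) (q := (2:ℝ) • x - y) (t := (1/2:ℝ))
    (by norm_num) (by norm_num) (aux_fin (hbound y hy)) (aux_fin (hbound _ hrefl))
  rw [← hx] at h
  have h2 := aux_toReal_le hbot (hbound _ hrefl)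
  nlinarith

/-- Lipschitz estimate at the center -/
lemma aux_lip {ψ : H → EReal} (hconv : EConvexOn ψ) (hbot : ∀ x, ψ x ≠ ⊥)
    {x : H} {ε M : ℝ} (hε : 0 < ε) (hbound : ∀ y ∈ ball x ε, ψ y ≤ (M : EReal))
    {y : H} (hy : y ∈ ball x (ε/2)) :
    |(ψ y).toReal - (ψ x).toReal| ≤ 2 * (M - (ψ x).toReal) / ε * ‖y - x‖ := by
  have hupper : ∀ w ∈ ball x (ε/2),
      (ψ w).toReal - (ψ x).toReal ≤ 2 * (M - (ψ x).toReal) / ε * ‖w - x‖ := by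
    intro w hw
    rcases eq_or_ne w x with rfl | hne
    · simp
    · set t : ℝ := 2 * ‖w - x‖ / ε with ht
      have hwx : 0 < ‖w - x‖ := by
        rw [norm_pos_iff, sub_ne_zero]; exact hne
      have ht0 : 0 < t := by positivity
      have hwε : ‖w - x‖ < ε/2 := by
        have := mem_ball.1 hw; rwa [dist_eq_norm] at this
      have ht1 : t < 1 := by rw [ht, div_lt_one hε]; linarith
      set z : H := x + t⁻¹ • (w - x) with hz
      have hzball : z ∈ ball x ε := by
        rw [mem_ball, dist_eq_norm]
        have h1 : z - x = t⁻¹ • (w - x) := by rw [hz]; abel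
        rw [h1, norm_smul, Real.norm_eq_abs, abs_inv, abs_of_pos ht0]
        have h2 : t⁻¹ * ‖w - x‖ = ε / 2 := by
          rw [ht]; field_simp
        rw [h2]; linarith
      have hcomb : w = t • z + (1 - t) • x := by
        rw [hz, smul_add, smul_smul, mul_inv_cancel₀ ht0.ne', one_smul]
        module
      have h := aux_conv hconv hbot (z := z) (q := x) (t := t) ht0.le ht1.le
        (aux_fin (hbound z hzball)) (aux_fin (hbound x (mem_ball_self hε)))
      rw [← hcomb] at h
      have hzle := aux_toReal_le hbot (hbound z hzball)
      have : (ψ w).toReal - (ψ x).toReal ≤ t * (M - (ψ x).toReal) := by nlinarith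
      calc (ψ w).toReal - (ψ x).toReal ≤ t * (M - (ψ x).toReal) := this
        _ = 2 * (M - (ψ x).toReal) / ε * ‖w - x‖ := by rw [ht]; ring
  have h1 := hupper y hy
  have hrefl : (2:ℝ) • x - y ∈ ball x (ε/2) := by
    rw [mem_ball, dist_eq_norm]
    have h2 : (2:ℝ) • x - y - x = x - y := by module
    rw [h2, ← dist_eq_norm, dist_comm]
    exact mem_ball.1 hy
  have h2 := hupper _ hrefl
  have hnorm : ‖(2:ℝ) • x - y - x‖ = ‖y - x‖ := by
    have h3 : (2:ℝ) • x - y - x = -(y - x) := by module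
    rw [h3, norm_neg]
  rw [hnorm] at h2
  have hmid : x = (1/2 : ℝ) • y + (1 - (1/2:ℝ)) • ((2:ℝ) • x - y) := by module
  have hball' : y ∈ ball x ε := ball_subset_ball (by linarith) hy
  have hball'' : (2:ℝ)•x - y ∈ ball x ε := ball_subset_ball (by linarith) hrefl
  have h3 := aux_conv hconv hbot (z := y) (q := (2:ℝ) • x - y) (t := (1/2:ℝ))
    (by norm_num) (by norm_num) (aux_fin (hbound y hball')) (aux_fin (hbound _ hball''))
  rw [← hmid] at h3
  rw [abs_le]
  constructor
  · nlinarith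
  · exact h1

/-- subgradient norm bound -/
lemma aux_nv {ψ : H → EReal} (hconv : EConvexOn ψ) (hbot : ∀ x, ψ x ≠ ⊥)
    {x : H} {ε M m : ℝ} (hε : 0 < ε) (hbound : ∀ y ∈ ball x ε, ψ y ≤ (M : EReal))
    (hlow : ∀ y ∈ ball x ε, m ≤ (ψ y).toReal)
    {d v : H} (hd : d ∈ ball x (ε/4)) (hv : v ∈ subdiff ψ d) :
    ‖v‖ ≤ 2 * (M - m) / ε := by
  have hdball : d ∈ ball x ε := ball_subset_ball (by linarith) hd
  have hMm : m ≤ M := le_trans (hlow d hdball) (aux_toReal_le hbot (hbound d hdball))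
  rcases eq_or_ne v 0 with rfl | hne
  · have h0 : (0:ℝ) ≤ M - m := by linarith
    simp; positivity
  · set z : H := d + (ε/2) • (‖v‖⁻¹ • v) with hz
    have hvpos : 0 < ‖v‖ := norm_pos_iff.2 hne
    have hzd : dist z d = ε/2 := by
      rw [dist_eq_norm, hz]
      simp only [add_sub_cancel_left]
      rw [norm_smul, norm_smul, Real.norm_eq_abs, abs_of_pos (by linarith : (0:ℝ) < ε/2),
        Real.norm_eq_abs, abs_inv, abs_of_pos hvpos, inv_mul_cancel₀ hvpos.ne']
      simp
    have hzball : z ∈ ball x ε := by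
      rw [mem_ball]
      calc dist z x ≤ dist z d + dist d x := dist_triangle _ _ _
        _ < ε/2 + ε/4 := by rw [hzd]; have := mem_ball.1 hd; linarith
        _ ≤ ε := by linarith
    have hsub := aux_subgrad hbot hv (aux_fin (hbound d hdball)) (aux_fin (hbound z hzball))
    have hinner : (inner ℝ v (z - d) : ℝ) = (ε/2) * ‖v‖ := by
      rw [hz]
      simp only [add_sub_cancel_left]
      rw [real_inner_smul_right, real_inner_smul_right, real_inner_self_eq_norm_sq]
      field_simp
    rw [hinner] at hsub
    have h1 := aux_toReal_le hbot (hbound z hzball)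
    have h2 := hlow d hdball
    rw [le_div_iff₀ hε]
    nlinarith


/-- two-point estimate for the difference of potentials with common subgradients -/
lemma aux_twopoint {ψ f : H → EReal} (hψbot : ∀ x, ψ x ≠ ⊥) (hfbot : ∀ x, f x ≠ ⊥)
    {d d' v v' : H} (hv : v ∈ subdiff ψ d) (hv' : v' ∈ subdiff ψ d')
    (hw : v ∈ subdiff f d) (hw' : v' ∈ subdiff f d')
    (h1 : ψ d ≠ ⊤) (h2 : ψ d' ≠ ⊤) (h3 : f d ≠ ⊤) (h4 : f d' ≠ ⊤) :
    |((ψ d').toReal - (f d').toReal) - ((ψ d).toReal - (f d).toReal)| ≤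
      (inner ℝ (v' - v) (d' - d) : ℝ) := by
  have a1 := aux_subgrad hψbot hv h1 h2
  have a2 := aux_subgrad hψbot hv' h2 h1
  have b1 := aux_subgrad hfbot hw h3 h4
  have b2 := aux_subgrad hfbot hw' h4 h3
  have hflip1 : (inner ℝ v' (d - d') : ℝ) = -(inner ℝ v' (d' - d) : ℝ) := by
    have h : d - d' = -(d' - d) := by abel
    rw [h, inner_neg_right]
  rw [hflip1] at a2
  have hflip2 : (inner ℝ v' (d - d') : ℝ) = -(inner ℝ v' (d' - d) : ℝ) := by
    have h : d - d' = -(d' - d) := by abel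
    rw [h, inner_neg_right]
  rw [hflip2] at b2
  rw [inner_sub_left, abs_le]
  constructor <;> nlinarith

set_option maxHeartbeats 1000000 in
/-- local constancy of the difference of potentials -/
lemma aux_locconst [CompleteSpace H] {ψ f : H → EReal}
    (hψbot : ∀ x, ψ x ≠ ⊥) (hψlsc : LowerSemicontinuous ψ) (hψconv : EConvexOn ψ)
    (hfbot : ∀ x, f x ≠ ⊥) (hflsc : LowerSemicontinuous f) (hfconv : EConvexOn f)
    {U D : Set H} (hUo : IsOpen U)
    (hUdom : U ⊆ interior {x : H | ψ x ≠ ⊤} ∩ interior {x : H | f x ≠ ⊤})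
    (hdense : U ⊆ closure D)
    (hgrad : ∀ x ∈ D, ∃ y : H, subdiff ψ x = {y} ∧ subdiff f x = {y})
    {x : H} (hx : x ∈ U) :
    ∃ δ > 0, ball x δ ⊆ U ∧ ∀ y ∈ ball x δ,
      (ψ y).toReal - (f y).toReal = (ψ x).toReal - (f x).toReal := by
  obtain ⟨r₁, hr₁, hball₁⟩ := Metric.isOpen_iff.1 hUo x hx
  obtain ⟨r₂, hr₂, hball₂⟩ := Metric.mem_nhds_iff.1
    (mem_interior_iff_mem_nhds.1 (hUdom hx).1)
  obtain ⟨r₃, hr₃, hball₃⟩ := Metric.mem_nhds_iff.1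
    (mem_interior_iff_mem_nhds.1 (hUdom hx).2)
  set r : ℝ := min r₁ (min r₂ r₃) / 4 with hrdef
  have hr : 0 < r := by positivity
  have h4r : ∀ y ∈ ball x (4*r), y ∈ U ∧ ψ y ≠ ⊤ ∧ f y ≠ ⊤ := by
    intro y hy
    have h1 : (4:ℝ)*r ≤ r₁ := by
      rw [hrdef]; have := min_le_left r₁ (min r₂ r₃); linarith
    have h2 : (4:ℝ)*r ≤ r₂ := by
      rw [hrdef]
      have := (min_le_right r₁ (min r₂ r₃)).trans (min_le_left r₂ r₃); linarith
    have h3 : (4:ℝ)*r ≤ r₃ := by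
      rw [hrdef]
      have := (min_le_right r₁ (min r₂ r₃)).trans (min_le_right r₂ r₃); linarith
    exact ⟨hball₁ (ball_subset_ball h1 hy), hball₂ (ball_subset_ball h2 hy),
      hball₃ (ball_subset_ball h3 hy)⟩
  obtain ⟨ε₁, hε₁, M₁, hε₁r, hbd₁⟩ := aux_locbound hψlsc hψconv hψbot hr
    (fun y hy => (h4r y hy).2.1)
  obtain ⟨ε₂, hε₂, M₂, hε₂r, hbd₂⟩ := aux_locbound hflsc hfconv hfbot hr
    (fun y hy => (h4r y hy).2.2)
  set ε : ℝ := min ε₁ ε₂ with hεdef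
  have hε : 0 < ε := lt_min hε₁ hε₂
  have hεr : ε ≤ r := (min_le_left _ _).trans hε₁r
  set M : ℝ := max M₁ M₂ with hMdef
  have hboundψ : ∀ y ∈ ball x ε, ψ y ≤ (M : EReal) := fun y hy =>
    (hbd₁ y (ball_subset_ball (min_le_left _ _) hy)).trans
      (EReal.coe_le_coe_iff.2 (le_max_left _ _))
  have hboundf : ∀ y ∈ ball x ε, f y ≤ (M : EReal) := fun y hy =>
    (hbd₂ y (ball_subset_ball (min_le_right _ _) hy)).trans
      (EReal.coe_le_coe_iff.2 (le_max_right _ _))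
  have hballU : ball x ε ⊆ U := fun y hy =>
    (h4r y (ball_subset_ball (by linarith) hy)).1
  set m : ℝ := min (2 * (ψ x).toReal - M) (2 * (f x).toReal - M) with hmdef
  have hlowψ : ∀ y ∈ ball x ε, m ≤ (ψ y).toReal := fun y hy =>
    (min_le_left _ _).trans (aux_lower hψconv hψbot hboundψ hy)
  have hlowf : ∀ y ∈ ball x ε, m ≤ (f y).toReal := fun y hy =>
    (min_le_right _ _).trans (aux_lower hfconv hfbot hboundf hy)
  have hΦxM : (ψ x).toReal ≤ M := aux_toReal_le hψbot (hboundψ x (mem_ball_self hε))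
  have hmM : m ≤ M := le_trans (hlowψ x (mem_ball_self hε)) hΦxM
  set L : ℝ := 2 * (M - m) / ε with hLdef
  set K : ℝ := 4 * (M - m) / ε with hKdef
  have hL0 : 0 ≤ L := by rw [hLdef]; apply div_nonneg (by linarith) hε.le
  have hK0 : 0 ≤ K := by rw [hKdef]; apply div_nonneg (by linarith) hε.le
  -- uniform Lipschitz estimates on ball x (ε/8)
  have hlip : ∀ (g : H → EReal), EConvexOn g → (∀ w, g w ≠ ⊥) →
      (∀ w ∈ ball x ε, g w ≤ (M : EReal)) → (∀ w ∈ ball x ε, m ≤ (g w).toReal) →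
      ∀ y ∈ ball x (ε/8), ∀ z ∈ ball x (ε/8),
      |(g z).toReal - (g y).toReal| ≤ K * ‖z - y‖ := by
    intro g hgconv hgbot hgbd hglow y hy z hz
    have hybd : ∀ w ∈ ball y (ε/2), g w ≤ (M : EReal) := by
      intro w hw
      apply hgbd
      rw [mem_ball] at *
      calc dist w x ≤ dist w y + dist y x := dist_triangle _ _ _
        _ < ε/2 + ε/8 := by gcongr
        _ ≤ ε := by linarith
    have hzy : z ∈ ball y ((ε/2)/2) := by
      rw [mem_ball] at *
      calc dist z y ≤ dist z x + dist x y := dist_triangle _ _ _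
        _ < ε/8 + ε/8 := by rw [dist_comm x y]; gcongr
        _ ≤ (ε/2)/2 := by linarith
    have h := aux_lip hgconv hgbot (by linarith : (0:ℝ) < ε/2) hybd hzy
    have hym : m ≤ (g y).toReal := hglow y (ball_subset_ball (by linarith) hy)
    calc |(g z).toReal - (g y).toReal| ≤ 2 * (M - (g y).toReal) / (ε/2) * ‖z - y‖ := h
      _ ≤ K * ‖z - y‖ := by
          apply mul_le_mul_of_nonneg_right _ (norm_nonneg _)
          rw [hKdef, div_le_div_iff₀ (by linarith) hε]
          nlinarith
  have hlipΦ := hlip ψ hψconv hψbot hboundψ hlowψ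
  have hlipF := hlip f hfconv hfbot hboundf hlowf
  -- subgradient norm bounds
  have hLψ : ∀ d ∈ ball x (ε/4), ∀ v ∈ subdiff ψ d, ‖v‖ ≤ L :=
    fun d hd v hv => aux_nv hψconv hψbot hε hboundψ hlowψ hd hv
  refine ⟨ε/16, by positivity, fun y hy => hballU (ball_subset_ball (by linarith) hy), ?_⟩
  intro y hy
  set δ : ℝ := ε/16 with hδdef
  have hδ : 0 < δ := by positivity
  have key : ∀ η : ℝ, 0 < η →
      |((ψ y).toReal - (f y).toReal) - ((ψ x).toReal - (f x).toReal)| ≤ η := by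
    intro η hη
    obtain ⟨N, hN⟩ := exists_nat_gt (4*L*δ/η + 1)
    have hLδη : 0 ≤ 4*L*δ/η := div_nonneg (by nlinarith) hη.le
    have hNpos : (0:ℝ) < N := by linarith
    have hNnat : 0 < N := by exact_mod_cast hNpos
    set σ : ℝ := min (δ/2) (η/(8*(K + L*N) + 1)) with hσdef
    have hKLN : (0:ℝ) ≤ K + L*N := by nlinarith
    have hσKL : (0:ℝ) < 8*(K + L*N) + 1 := by linarith
    have hσ : 0 < σ := lt_min (by linarith) (by positivity)
    have hσδ : σ ≤ δ/2 := min_le_left _ _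
    set Δ : H := ((N:ℝ))⁻¹ • (y - x) with hΔdef
    set p : ℕ → H := fun i => x + (((min i N : ℕ) : ℝ)/N) • (y - x) with hpdef
    have hyδ : ‖y - x‖ < δ := by
      have := mem_ball.1 hy; rwa [dist_eq_norm] at this
    have hpball : ∀ i, p i ∈ ball x δ := by
      intro i
      rw [mem_ball, dist_eq_norm, hpdef]
      simp only [add_sub_cancel_left]
      rw [norm_smul, Real.norm_eq_abs]
      have h1 : ((min i N : ℕ) : ℝ)/N ≤ 1 := by
        rw [div_le_one hNpos]
        exact_mod_cast Nat.min_le_right i N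
      have h2 : (0:ℝ) ≤ ((min i N : ℕ) : ℝ)/N := by positivity
      calc |((min i N : ℕ) : ℝ)/N| * ‖y - x‖ ≤ 1 * ‖y - x‖ := by
            rw [abs_of_nonneg h2]; exact mul_le_mul_of_nonneg_right h1 (norm_nonneg _)
        _ < δ := by rw [one_mul]; exact hyδ
    have hpU : ∀ i, p i ∈ U := fun i =>
      hballU (ball_subset_ball (by linarith) (hpball i))
    have hpd : ∀ i : ℕ, ∃ d, d ∈ D ∧ dist d (p i) < σ := by
      intro i
      obtain ⟨b, hbD, hb⟩ := Metric.mem_closure_iff.1 (hdense (hpU i)) σ hσ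
      exact ⟨b, hbD, by rwa [dist_comm]⟩
    choose d hdD hdp using hpd
    choose v hv1 hv2 using fun i : ℕ => hgrad (d i) (hdD i)
    have hvψ : ∀ i, v i ∈ subdiff ψ (d i) := fun i => by rw [hv1 i]; rfl
    have hvf : ∀ i, v i ∈ subdiff f (d i) := fun i => by rw [hv2 i]; rfl
    have hd8 : ∀ i, d i ∈ ball x (ε/8) := by
      intro i
      rw [mem_ball]
      calc dist (d i) x ≤ dist (d i) (p i) + dist (p i) x := dist_triangle _ _ _
        _ < σ + δ := by gcongr; exacts [hdp i, mem_ball.1 (hpball i)]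
        _ ≤ ε/8 := by rw [hδdef] at hσδ ⊢; linarith
    have hd4 : ∀ i, d i ∈ ball x (ε/4) := fun i =>
      ball_subset_ball (by linarith) (hd8 i)
    have hvL : ∀ i, ‖v i‖ ≤ L := fun i => hLψ (d i) (hd4 i) (v i) (hvψ i)
    have hdfinψ : ∀ i, ψ (d i) ≠ ⊤ := fun i =>
      aux_fin (hboundψ _ (ball_subset_ball (by linarith) (hd8 i)))
    have hdfinf : ∀ i, f (d i) ≠ ⊤ := fun i =>
      aux_fin (hboundf _ (ball_subset_ball (by linarith) (hd8 i)))
    have hstep : ∀ i : ℕ,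
        |((ψ (d (i+1))).toReal - (f (d (i+1))).toReal) -
          ((ψ (d i)).toReal - (f (d i)).toReal)| ≤
        (inner ℝ (v (i+1) - v i) (d (i+1) - d i) : ℝ) := fun i =>
      aux_twopoint hψbot hfbot (hvψ i) (hvψ (i+1)) (hvf i) (hvf (i+1))
        (hdfinψ i) (hdfinψ (i+1)) (hdfinf i) (hdfinf (i+1))
    have hpstep : ∀ i, i < N → p (i+1) - p i = Δ := by
      intro i hi
      rw [hpdef, hΔdef]
      simp only [add_sub_add_left_eq_sub]
      rw [← sub_smul]
      congr 1
      rw [Nat.min_eq_left hi.le, Nat.min_eq_left (by omega : i + 1 ≤ N)]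
      push_cast
      field_simp
      ring
    have hsplit : ∀ i, i < N → (inner ℝ (v (i+1) - v i) (d (i+1) - d i) : ℝ) =
        (inner ℝ (v (i+1) - v i) Δ : ℝ) +
        (inner ℝ (v (i+1) - v i) ((d (i+1) - p (i+1)) - (d i - p i)) : ℝ) := by
      intro i hi
      rw [← inner_add_right]
      congr 1
      rw [← hpstep i hi]
      abel
    have htel : ∑ i ∈ Finset.range N, (inner ℝ (v (i+1) - v i) Δ : ℝ) =
        (inner ℝ (v N - v 0) Δ : ℝ) := by
      rw [inner_sub_left, ← Finset.sum_range_sub (fun i => (inner ℝ (v i) Δ : ℝ)) N]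
      exact Finset.sum_congr rfl fun i _ => by rw [inner_sub_left]
    have hecontrol : ∀ i, (inner ℝ (v (i+1) - v i) ((d (i+1) - p (i+1)) - (d i - p i)) : ℝ)
        ≤ 4 * L * σ := by
      intro i
      calc (inner ℝ (v (i+1) - v i) ((d (i+1) - p (i+1)) - (d i - p i)) : ℝ)
          ≤ ‖v (i+1) - v i‖ * ‖(d (i+1) - p (i+1)) - (d i - p i)‖ := real_inner_le_norm _ _
        _ ≤ (2*L) * (2*σ) := by
            apply mul_le_mul _ _ (norm_nonneg _) (by linarith)
            · calc ‖v (i+1) - v i‖ ≤ ‖v (i+1)‖ + ‖v i‖ := norm_sub_le _ _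
                _ ≤ 2*L := by have := hvL (i+1); have := hvL i; linarith
            · calc ‖(d (i+1) - p (i+1)) - (d i - p i)‖
                  ≤ ‖d (i+1) - p (i+1)‖ + ‖d i - p i‖ := norm_sub_le _ _
                _ ≤ 2*σ := by
                    have h1 := hdp (i+1); have h2 := hdp i
                    rw [dist_eq_norm] at h1 h2
                    linarith
        _ = 4 * L * σ := by ring
    have hteles : (inner ℝ (v N - v 0) Δ : ℝ) ≤ 2 * L * (δ / N) := by
      calc (inner ℝ (v N - v 0) Δ : ℝ) ≤ ‖v N - v 0‖ * ‖Δ‖ := real_inner_le_norm _ _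
        _ ≤ (2*L) * (δ/N) := by
            apply mul_le_mul _ _ (norm_nonneg _) (by linarith)
            · calc ‖v N - v 0‖ ≤ ‖v N‖ + ‖v 0‖ := norm_sub_le _ _
                _ ≤ 2*L := by have := hvL N; have := hvL 0; linarith
            · rw [hΔdef, norm_smul, Real.norm_eq_abs, abs_inv, Nat.abs_cast,
                div_eq_inv_mul]
              exact mul_le_mul_of_nonneg_left hyδ.le (by positivity)
        _ = 2 * L * (δ/N) := by ring
    have hmid : |((ψ (d N)).toReal - (f (d N)).toReal) -
        ((ψ (d 0)).toReal - (f (d 0)).toReal)| ≤ 2 * L * (δ/N) + 4 * L * σ * N := by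
      have h1 : ((ψ (d N)).toReal - (f (d N)).toReal) -
          ((ψ (d 0)).toReal - (f (d 0)).toReal) =
          ∑ i ∈ Finset.range N, (((ψ (d (i+1))).toReal - (f (d (i+1))).toReal) -
            ((ψ (d i)).toReal - (f (d i)).toReal)) := by
        rw [Finset.sum_range_sub (fun i => (ψ (d i)).toReal - (f (d i)).toReal) N]
      rw [h1]
      calc |∑ i ∈ Finset.range N, (((ψ (d (i+1))).toReal - (f (d (i+1))).toReal) -
            ((ψ (d i)).toReal - (f (d i)).toReal))|
          ≤ ∑ i ∈ Finset.range N, |((ψ (d (i+1))).toReal - (f (d (i+1))).toReal) -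
            ((ψ (d i)).toReal - (f (d i)).toReal)| := Finset.abs_sum_le_sum_abs _ _
        _ ≤ ∑ i ∈ Finset.range N, ((inner ℝ (v (i+1) - v i) Δ : ℝ) + 4 * L * σ) := by
            apply Finset.sum_le_sum
            intro i hi
            rw [Finset.mem_range] at hi
            calc |((ψ (d (i+1))).toReal - (f (d (i+1))).toReal) -
                  ((ψ (d i)).toReal - (f (d i)).toReal)|
                ≤ (inner ℝ (v (i+1) - v i) (d (i+1) - d i) : ℝ) := hstep i
              _ = (inner ℝ (v (i+1) - v i) Δ : ℝ) +
                  (inner ℝ (v (i+1) - v i) ((d (i+1) - p (i+1)) - (d i - p i)) : ℝ) :=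
                  hsplit i hi
              _ ≤ (inner ℝ (v (i+1) - v i) Δ : ℝ) + 4 * L * σ := by
                  linarith [hecontrol i]
        _ = (∑ i ∈ Finset.range N, (inner ℝ (v (i+1) - v i) Δ : ℝ)) + N * (4 * L * σ) := by
            rw [Finset.sum_add_distrib, Finset.sum_const, Finset.card_range]
            simp [nsmul_eq_mul]
        _ ≤ 2 * L * (δ/N) + 4 * L * σ * N := by
            rw [htel]
            nlinarith [hteles]
    have hp0 : p 0 = x := by rw [hpdef]; simp
    have hpN : p N = y := by
      rw [hpdef]
      simp only [min_self]
      rw [div_self (by exact_mod_cast hNpos.ne' : (N:ℝ) ≠ 0), one_smul]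
      abel
    have hyball8 : y ∈ ball x (ε/8) :=
      ball_subset_ball (by rw [hδdef] at hy ⊢; linarith) hy
    have hxball8 : x ∈ ball x (ε/8) := mem_ball_self (by linarith)
    have hend : ∀ (i : ℕ) (w : H), p i = w → w ∈ ball x (ε/8) →
        |((ψ (d i)).toReal - (f (d i)).toReal) - ((ψ w).toReal - (f w).toReal)|
        ≤ 2 * K * σ := by
      intro i w hpi hw
      have hdw : ‖d i - w‖ ≤ σ := by
        have := hdp i
        rw [hpi, dist_eq_norm] at this
        linarith
      have h1 := hlipΦ w hw (d i) (hd8 i)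
      have h2 := hlipF w hw (d i) (hd8 i)
      have h3 : K * ‖d i - w‖ ≤ K * σ := mul_le_mul_of_nonneg_left hdw hK0
      calc |((ψ (d i)).toReal - (f (d i)).toReal) - ((ψ w).toReal - (f w).toReal)|
          ≤ |(ψ (d i)).toReal - (ψ w).toReal| + |(f (d i)).toReal - (f w).toReal| := by
            rw [sub_sub_sub_comm]
            exact abs_sub _ _
        _ ≤ 2 * K * σ := by linarith
    have hendN := hend N y hpN hyball8
    have hend0 := hend 0 x hp0 hxball8
    have hcomb : |((ψ y).toReal - (f y).toReal) - ((ψ x).toReal - (f x).toReal)| ≤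
        2*K*σ + (2 * L * (δ/N) + 4 * L * σ * N) + 2*K*σ := by
      have t1 := abs_sub_le ((ψ y).toReal - (f y).toReal)
        ((ψ (d N)).toReal - (f (d N)).toReal) ((ψ x).toReal - (f x).toReal)
      have t2 := abs_sub_le ((ψ (d N)).toReal - (f (d N)).toReal)
        ((ψ (d 0)).toReal - (f (d 0)).toReal) ((ψ x).toReal - (f x).toReal)
      have t3 : |((ψ y).toReal - (f y).toReal) - ((ψ (d N)).toReal - (f (d N)).toReal)|
          = |((ψ (d N)).toReal - (f (d N)).toReal) - ((ψ y).toReal - (f y).toReal)| :=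
        abs_sub_comm _ _
      linarith [hmid, hendN, hend0]
    have harith1 : 2 * L * (δ/N) ≤ η/2 := by
      have h5 : 4*L*δ/η < (N:ℝ) - 1 := by linarith
      rw [div_lt_iff₀ hη] at h5
      have h7 : 2*L*(δ/N) * N = 2*L*δ := by field_simp
      nlinarith [hNpos, hη, h5, h7]
    have harith2 : 4*K*σ + 4 * L * σ * N ≤ η/2 := by
      have hσ2 : σ ≤ η/(8*(K + L*N) + 1) := min_le_right _ _
      rw [le_div_iff₀ hσKL] at hσ2
      nlinarith [mul_nonneg hL0 hNpos.le]
    linarith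
  by_contra hne
  have hpos : 0 < |((ψ y).toReal - (f y).toReal) - ((ψ x).toReal - (f x).toReal)| := by
    rw [abs_pos, sub_ne_zero]
    exact fun h => hne (by linarith)
  have := key (|((ψ y).toReal - (f y).toReal) - ((ψ x).toReal - (f x).toReal)|/2)
    (by linarith)
  linarith

end AuxPotentials

theorem potentials_agree_up_to_constant
    {H : Type*} [NormedAddCommGroup H] [InnerProductSpace ℝ H]
    [CompleteSpace H] [SecondCountableTopology H]
    (U : Set H) (hUo : IsOpen U) (hUne : U.Nonempty) (hUconn : IsConnected U)
    (ψ f : H → EReal) (hψ : ProperLscConvex ψ) (hf : ProperLscConvex f)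
    (hUdom : U ⊆ interior {x : H | ψ x ≠ ⊤} ∩ interior {x : H | f x ≠ ⊤})
    (D : Set H) (hDU : D ⊆ U) (hdense : U ⊆ closure D)
    (hgrad : ∀ x ∈ D, ∃ y : H, subdiff ψ x = {y} ∧ subdiff f x = {y}) :
    ∃ a : ℝ, ∀ x ∈ U, ψ x = f x + (a : EReal) := by
  obtain ⟨-, hψbot, hψlsc, hψconv⟩ := hψ
  obtain ⟨-, hfbot, hflsc, hfconv⟩ := hf
  have loc : ∀ x ∈ U, ∃ δ > 0, ball x δ ⊆ U ∧ ∀ y ∈ ball x δ,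
      (ψ y).toReal - (f y).toReal = (ψ x).toReal - (f x).toReal :=
    fun x hx => aux_locconst hψbot hψlsc hψconv hfbot hflsc hfconv hUo hUdom
      hdense hgrad hx
  obtain ⟨x₀, hx₀⟩ := hUne
  choose! δ hδpos hδsub hδconst using loc
  set c : ℝ := (ψ x₀).toReal - (f x₀).toReal with hcdef
  have hconst : ∀ x ∈ U, (ψ x).toReal - (f x).toReal = c := by
    set A : Set H := ⋃ (z : H) (_ : z ∈ U ∧ (ψ z).toReal - (f z).toReal = c),
      ball z (δ z) with hA
    set B : Set H := ⋃ (z : H) (_ : z ∈ U ∧ (ψ z).toReal - (f z).toReal ≠ c),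
      ball z (δ z) with hB
    have hAopen : IsOpen A := isOpen_iUnion fun z => isOpen_iUnion fun _ => isOpen_ball
    have hBopen : IsOpen B := isOpen_iUnion fun z => isOpen_iUnion fun _ => isOpen_ball
    have hcover : U ⊆ A ∪ B := by
      intro z hz
      rcases eq_or_ne ((ψ z).toReal - (f z).toReal) c with h | h
      · exact Or.inl (Set.mem_iUnion₂.2 ⟨z, ⟨hz, h⟩, mem_ball_self (hδpos z hz)⟩)
      · exact Or.inr (Set.mem_iUnion₂.2 ⟨z, ⟨hz, h⟩, mem_ball_self (hδpos z hz)⟩)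
    have hAne : (U ∩ A).Nonempty :=
      ⟨x₀, hx₀, Set.mem_iUnion₂.2 ⟨x₀, ⟨hx₀, rfl⟩, mem_ball_self (hδpos x₀ hx₀)⟩⟩
    by_cases hBne : (U ∩ B).Nonempty
    · obtain ⟨w, -, hwA, hwB⟩ := hUconn.isPreconnected A B hAopen hBopen hcover hAne hBne
      obtain ⟨z₁, ⟨hz₁U, hz₁⟩, hwz₁⟩ := Set.mem_iUnion₂.1 hwA
      obtain ⟨z₂, ⟨hz₂U, hz₂⟩, hwz₂⟩ := Set.mem_iUnion₂.1 hwB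
      have e1 := hδconst z₁ hz₁U w hwz₁
      have e2 := hδconst z₂ hz₂U w hwz₂
      exact absurd (by linarith : (ψ z₂).toReal - (f z₂).toReal = c) hz₂
    · intro z hz
      by_contra h
      exact hBne ⟨z, hz, Set.mem_iUnion₂.2 ⟨z, ⟨hz, h⟩, mem_ball_self (hδpos z hz)⟩⟩
  refine ⟨c, fun x hx => ?_⟩
  have hψfin : ψ x ≠ ⊤ := interior_subset (hUdom hx).1
  have hffin : f x ≠ ⊤ := interior_subset (hUdom hx).2
  have h1 : ψ x = (((ψ x).toReal : ℝ) : EReal) := (EReal.coe_toReal hψfin (hψbot x)).symm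
  have h2 : f x = (((f x).toReal : ℝ) : EReal) := (EReal.coe_toReal hffin (hfbot x)).symm
  rw [h1, h2, ← EReal.coe_add]
  congr 1
  have := hconst x hx
  linarith


end
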